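/- Let t, d, s, k be positive integers, let H ⊆ ℝ^t be a finite set with inference dimension at most d and with |H| ≥ s·k, and let x ∈ ℝ^t. If S is chosen uniformly at random among all subsets of H of cardinality s·k, then the probability that |H \ infer(S, x)| ≥ (2d/(s+1))·|H| is at most (1/2)^k. (In the paper this is applied with k = c·log_2 n, giving probability at most 1/n^c.) -/

import Mathlib

open scoped Classical

noncomputable section

/-- The standard inner product on `Fin t → ℝ`. -/
def qInner {t : ℕ} (u v : Fin t → ℝ) : ℝ := ∑ i, u i * v i

/-- `y` is query-consistent with `x` on `S`: all label queries and all comparison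
queries on `S` give the same answers for `y` as for `x`. -/
def QueryConsistent {t : ℕ} (S : Set (Fin t → ℝ)) (x y : Fin t → ℝ) : Prop :=
  (∀ h ∈ S, Real.sign (qInner h y) = Real.sign (qInner h x)) ∧
  (∀ h ∈ S, ∀ h' ∈ S, Real.sign (qInner (h - h') y) = Real.sign (qInner (h - h') x))

/-- `infer S x` is the set of points `h` whose sign `sign ⟨h, x⟩` is fully determined
by the answers to the label and comparison queries on `S` at `x`. -/
def infer {t : ℕ} (S : Set (Fin t → ℝ)) (x : Fin t → ℝ) : Set (Fin t → ℝ) :=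
  {h | ∀ y : Fin t → ℝ, QueryConsistent S x y →
    Real.sign (qInner h y) = Real.sign (qInner h x)}

/-- The inference dimension of a finite set `H ⊆ ℝ^t`: the smallest `d ≥ 1` such that
for every `S ⊆ H` with `|S| ≥ d` and every `x` there is `h ∈ S` with
`h ∈ infer (S \ {h}) x`. -/
def inferenceDim {t : ℕ} (H : Finset (Fin t → ℝ)) : ℕ :=
  sInf {d | 1 ≤ d ∧ ∀ S : Finset (Fin t → ℝ), S ⊆ H → d ≤ S.card →
    ∀ x : Fin t → ℝ, ∃ h ∈ S, h ∈ infer (↑(S.erase h)) x}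

lemma infer_mono {t : ℕ} {S S' : Set (Fin t → ℝ)} (hSS : S ⊆ S') (x : Fin t → ℝ) :
    infer S x ⊆ infer S' x := by
  intro h hh y hy
  exact hh y ⟨fun g hg => hy.1 g (hSS hg), fun g hg g' hg' => hy.2 g (hSS hg) g' (hSS hg')⟩

lemma mem_infer {t : ℕ} {S : Set (Fin t → ℝ)} {h : Fin t → ℝ} (hh : h ∈ S) (x : Fin t → ℝ) :
    h ∈ infer S x := fun _ hy => hy.1 h hh

lemma inferenceDim_prop {t : ℕ} {H : Finset (Fin t → ℝ)} {d : ℕ}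
    (hdim : inferenceDim H ≤ d) :
    ∀ S : Finset (Fin t → ℝ), S ⊆ H → d ≤ S.card →
      ∀ x : Fin t → ℝ, ∃ h ∈ S, h ∈ infer (↑(S.erase h)) x := by
  set D : Set ℕ := {d | 1 ≤ d ∧ ∀ S : Finset (Fin t → ℝ), S ⊆ H → d ≤ S.card →
    ∀ x : Fin t → ℝ, ∃ h ∈ S, h ∈ infer (↑(S.erase h)) x} with hD
  have hne : (H.card + 1) ∈ D := by
    refine ⟨Nat.succ_le_succ (Nat.zero_le _), fun S hS hcard x => ?_⟩
    exact absurd (le_trans hcard (Finset.card_le_card hS)) (by omega)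
  have hmem : inferenceDim H ∈ D := Nat.sInf_mem ⟨_, hne⟩
  intro S hS hcard x
  exact hmem.2 S hS (le_trans hdim hcard) x

lemma fact2 {t : ℕ} {H : Finset (Fin t → ℝ)} {d : ℕ}
    (hprop : ∀ S : Finset (Fin t → ℝ), S ⊆ H → d ≤ S.card →
      ∀ x : Fin t → ℝ, ∃ h ∈ S, h ∈ infer (↑(S.erase h)) x)
    (x : Fin t → ℝ) (hd : 0 < d) :
    ∀ T : Finset (Fin t → ℝ), T ⊆ H →
      (T.filter fun h => h ∉ infer (↑(T.erase h)) x).card < d := by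
  intro T
  induction T using Finset.strongInduction with
  | _ T ih =>
    intro hTH
    by_cases hc : d ≤ T.card
    · obtain ⟨h₀, hh₀T, hh₀⟩ := hprop T hTH hc x
      have hsub : (T.filter fun h => h ∉ infer (↑(T.erase h)) x) ⊆
          ((T.erase h₀).filter fun h => h ∉ infer (↑((T.erase h₀).erase h)) x) := by
        intro h hh
        simp only [Finset.mem_filter] at hh ⊢
        have hne : h ≠ h₀ := by rintro rfl; exact hh.2 hh₀
        refine ⟨Finset.mem_erase.2 ⟨hne, hh.1⟩, fun hcon => hh.2 ?_⟩
        exact infer_mono (Finset.coe_subset.2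
          (Finset.erase_subset_erase h (Finset.erase_subset h₀ T))) x hcon
      calc (T.filter fun h => h ∉ infer (↑(T.erase h)) x).card
          ≤ _ := Finset.card_le_card hsub
        _ < d := ih (T.erase h₀) (Finset.erase_ssubset hh₀T)
            ((Finset.erase_subset h₀ T).trans hTH)
    · exact lt_of_le_of_lt (Finset.card_filter_le _ _) (not_le.mp hc)

lemma markovLem {t d s : ℕ} (hd : 0 < d) {H : Finset (Fin t → ℝ)} (hH : 0 < H.card)
    (x : Fin t → ℝ)
    (hfact : ∀ T : Finset (Fin t → ℝ), T ⊆ H →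
      (T.filter fun h => h ∉ infer (↑(T.erase h)) x).card < d)
    (T : Finset (Fin t → ℝ)) (hT : T ⊆ H) :
    2 * (((H \ T).powersetCard s).filter fun U =>
        (2 * (d : ℝ) / ((s : ℝ) + 1)) * (H.card : ℝ) ≤
          ((H.filter fun h => h ∉ infer (↑(T ∪ U)) x).card : ℝ)).card
      ≤ (H \ T).card.choose s := by
  set R := H \ T with hR
  set N := R.card with hN
  -- reindexing double-count, left side
  have cardL : (∑ U ∈ R.powersetCard s, ∑ h ∈ R,
        (if h ∉ U ∧ h ∉ infer (↑(T ∪ U)) x then 1 else 0)) =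
      (((R.powersetCard s) ×ˢ R).filter fun p =>
        p.2 ∉ p.1 ∧ p.2 ∉ infer (↑(T ∪ p.1)) x).card := by
    rw [Finset.card_filter, Finset.sum_product]
  have cardR : (∑ U ∈ R.powersetCard (s+1), ∑ h ∈ R,
        (if h ∈ U ∧ h ∉ infer (↑((T ∪ U).erase h)) x then 1 else 0)) =
      (((R.powersetCard (s+1)) ×ˢ R).filter fun p =>
        p.2 ∈ p.1 ∧ p.2 ∉ infer (↑((T ∪ p.1).erase p.2)) x).card := by
    rw [Finset.card_filter, Finset.sum_product]
  have hbij : (((R.powersetCard s) ×ˢ R).filter fun p =>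
        p.2 ∉ p.1 ∧ p.2 ∉ infer (↑(T ∪ p.1)) x).card =
      (((R.powersetCard (s+1)) ×ˢ R).filter fun p =>
        p.2 ∈ p.1 ∧ p.2 ∉ infer (↑((T ∪ p.1).erase p.2)) x).card := by
    apply Finset.card_nbij' (fun p => (insert p.2 p.1, p.2)) (fun p => (p.1.erase p.2, p.2))
    · rintro ⟨U, h⟩ hp
      simp only [Finset.mem_coe, Finset.mem_filter, Finset.mem_product, Finset.mem_powersetCard] at hp ⊢
      obtain ⟨⟨⟨hUR, hUcard⟩, hhR⟩, hhU, hinf⟩ := hp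
      have hhT : h ∉ T := (Finset.mem_sdiff.1 hhR).2
      refine ⟨⟨⟨Finset.insert_subset hhR hUR,
        by rw [Finset.card_insert_of_notMem hhU, hUcard]⟩, hhR⟩,
        Finset.mem_insert_self _ _, ?_⟩
      have he : (T ∪ insert h U).erase h = T ∪ U := by
        rw [Finset.erase_union_distrib, Finset.erase_eq_of_notMem hhT,
          Finset.erase_insert hhU]
      rw [he]; exact hinf
    · rintro ⟨U, h⟩ hp
      simp only [Finset.mem_coe, Finset.mem_filter, Finset.mem_product, Finset.mem_powersetCard] at hp ⊢
      obtain ⟨⟨⟨hUR, hUcard⟩, hhR⟩, hhU, hinf⟩ := hp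
      have hhT : h ∉ T := (Finset.mem_sdiff.1 hhR).2
      refine ⟨⟨⟨(Finset.erase_subset _ _).trans hUR,
        by simp [Finset.card_erase_of_mem hhU, hUcard]⟩, hhR⟩,
        Finset.notMem_erase _ _, ?_⟩
      have he : T ∪ U.erase h = (T ∪ U).erase h := by
        rw [Finset.erase_union_distrib, Finset.erase_eq_of_notMem hhT]
      rw [he]; exact hinf
    · rintro ⟨U, h⟩ hp
      simp only [Finset.mem_coe, Finset.mem_filter, Finset.mem_product] at hp
      simp [Finset.erase_insert hp.2.1]
    · rintro ⟨U, h⟩ hp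
      simp only [Finset.mem_coe, Finset.mem_filter, Finset.mem_product] at hp
      simp [Finset.insert_erase hp.2.1]
  -- per U' bound via fact2
  have keyR : ∀ U' ∈ R.powersetCard (s+1),
      (∑ h ∈ R, (if h ∈ U' ∧ h ∉ infer (↑((T ∪ U').erase h)) x then 1 else 0)) ≤ d - 1 := by
    intro U' hU'
    rw [Finset.mem_powersetCard] at hU'
    rw [← Finset.card_filter]
    have hsub : (R.filter fun h => h ∈ U' ∧ h ∉ infer (↑((T ∪ U').erase h)) x) ⊆
        ((T ∪ U').filter fun h => h ∉ infer (↑((T ∪ U').erase h)) x) := by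
      intro h hh
      simp only [Finset.mem_filter] at hh ⊢
      exact ⟨Finset.mem_union_right _ hh.2.1, hh.2.2⟩
    have h2 := hfact (T ∪ U')
      (Finset.union_subset hT (hU'.1.trans Finset.sdiff_subset))
    have h1 := Finset.card_le_card hsub
    omega
  -- the key natural-number bound
  have key : (∑ U ∈ R.powersetCard s,
      (H.filter fun h => h ∉ infer (↑(T ∪ U)) x).card) ≤ N.choose (s+1) * (d-1) := by
    have hA : ∀ U ∈ R.powersetCard s,
        (H.filter fun h => h ∉ infer (↑(T ∪ U)) x).card ≤
          ∑ h ∈ R, (if h ∉ U ∧ h ∉ infer (↑(T ∪ U)) x then 1 else 0) := by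
      intro U hU
      rw [← Finset.card_filter]
      apply Finset.card_le_card
      intro h hh
      simp only [Finset.mem_filter] at hh ⊢
      have hhTU : h ∉ T ∪ U := fun hc => hh.2 (mem_infer (Finset.mem_coe.2 hc) x)
      rw [Finset.mem_union] at hhTU
      push_neg at hhTU
      exact ⟨Finset.mem_sdiff.2 ⟨hh.1, hhTU.1⟩, hhTU.2, hh.2⟩
    calc (∑ U ∈ R.powersetCard s, (H.filter fun h => h ∉ infer (↑(T ∪ U)) x).card)
        ≤ ∑ U ∈ R.powersetCard s, ∑ h ∈ R,
            (if h ∉ U ∧ h ∉ infer (↑(T ∪ U)) x then 1 else 0) := Finset.sum_le_sum hA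
      _ = ∑ U ∈ R.powersetCard (s+1), ∑ h ∈ R,
            (if h ∈ U ∧ h ∉ infer (↑((T ∪ U).erase h)) x then 1 else 0) := by
          rw [cardL, hbij, ← cardR]
      _ ≤ (R.powersetCard (s+1)).card • (d - 1) := Finset.sum_le_card_nsmul _ _ _ keyR
      _ = N.choose (s+1) * (d-1) := by rw [smul_eq_mul, Finset.card_powersetCard]
  -- Markov via reals
  set ε : ℝ := 2 * (d : ℝ) / ((s : ℝ) + 1) * (H.card : ℝ) with hε
  have hs1 : (0:ℝ) < (s:ℝ) + 1 := by positivity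
  have hdR : (0:ℝ) < (d:ℝ) := by exact_mod_cast hd
  have hnR : (0:ℝ) < (H.card:ℝ) := by exact_mod_cast hH
  have hεpos : 0 < ε := by rw [hε]; positivity
  set A := (R.powersetCard s).filter (fun U =>
      ε ≤ ((H.filter fun h => h ∉ infer (↑(T ∪ U)) x).card : ℝ)) with hAdef
  have hlow : (A.card : ℝ) * ε ≤ ∑ U ∈ R.powersetCard s,
      ((H.filter fun h => h ∉ infer (↑(T ∪ U)) x).card : ℝ) := by
    have h1 : (A.card : ℝ) * ε = ∑ _U ∈ A, ε := by
      rw [Finset.sum_const, nsmul_eq_mul]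
    rw [h1]
    refine le_trans (Finset.sum_le_sum ?_)
      (Finset.sum_le_sum_of_subset_of_nonneg (Finset.filter_subset _ _) ?_)
    · intro U hU; exact (Finset.mem_filter.1 hU).2
    · intro i _ _; positivity
  have hup : (∑ U ∈ R.powersetCard s,
      ((H.filter fun h => h ∉ infer (↑(T ∪ U)) x).card : ℝ)) ≤
      ((N.choose (s+1) * (d-1) : ℕ) : ℝ) := by
    exact_mod_cast key
  have hmain : (A.card : ℝ) * ε ≤ ((N.choose (s+1) * (d-1) : ℕ) : ℝ) := le_trans hlow hup
  have hNn : N ≤ H.card := Finset.card_le_card (by rw [hR]; exact Finset.sdiff_subset)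
  have hnat : 2 * (N.choose (s+1) * (d-1)) * (s+1) ≤ 2 * d * H.card * N.choose s := by
    have h1 : N.choose (s+1) * (s+1) = N.choose s * (N - s) := Nat.choose_succ_right_eq N s
    calc 2 * (N.choose (s+1) * (d-1)) * (s+1)
        = 2 * ((N.choose (s+1) * (s+1)) * (d-1)) := by ring
      _ = 2 * ((N.choose s * (N - s)) * (d-1)) := by rw [h1]
      _ ≤ 2 * ((N.choose s * H.card) * d) := by
          exact Nat.mul_le_mul_left _ (Nat.mul_le_mul
            (Nat.mul_le_mul_left _ (le_trans (Nat.sub_le _ _) hNn)) (Nat.sub_le _ _))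
      _ = 2 * d * H.card * N.choose s := by ring
  have h2 : 2 * ((N.choose (s+1) * (d-1) : ℕ) : ℝ) ≤ (N.choose s : ℝ) * ε := by
    rw [hε, show (N.choose s:ℝ) * (2*(d:ℝ)/((s:ℝ)+1)*(H.card:ℝ)) =
      2*(d:ℝ)*(H.card:ℝ)*(N.choose s:ℝ)/((s:ℝ)+1) from by ring, le_div_iff₀ hs1]
    exact_mod_cast hnat
  have h3 : (2*(A.card:ℝ)) * ε ≤ (N.choose s : ℝ) * ε := by
    calc (2*(A.card:ℝ))*ε = 2*((A.card:ℝ)*ε) := by ring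
      _ ≤ 2 * ((N.choose (s+1) * (d-1) : ℕ) : ℝ) := by linarith
      _ ≤ _ := h2
  have h4 : 2*(A.card:ℝ) ≤ (N.choose s:ℝ) := le_of_mul_le_mul_right h3 hεpos
  exact_mod_cast h4

lemma badMono {t d s : ℕ} {H : Finset (Fin t → ℝ)} (x : Fin t → ℝ)
    {T S : Finset (Fin t → ℝ)} (hTS : T ⊆ S)
    (hS : (2 * (d : ℝ) / ((s : ℝ) + 1)) * (H.card : ℝ) ≤
      ((H.filter fun h => h ∉ infer (↑S) x).card : ℝ)) :
    (2 * (d : ℝ) / ((s : ℝ) + 1)) * (H.card : ℝ) ≤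
      ((H.filter fun h => h ∉ infer (↑T) x).card : ℝ) := by
  refine le_trans hS ?_
  have hsub : (H.filter fun h => h ∉ infer (↑S) x) ⊆ (H.filter fun h => h ∉ infer (↑T) x) := by
    intro h hh
    simp only [Finset.mem_filter] at hh ⊢
    exact ⟨hh.1, fun hc => hh.2 (infer_mono (Finset.coe_subset.2 hTS) x hc)⟩
  exact_mod_cast Finset.card_le_card hsub

lemma stepLemGen {α : Type*} [DecidableEq α] (H : Finset α) (Bad : Finset α → Prop)
    (hmono : ∀ {T S : Finset α}, T ⊆ S → Bad S → Bad T)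
    (s m M : ℕ)
    (hmarkov : ∀ T : Finset α, T ⊆ H → T.card = m →
      2 * (((H \ T).powersetCard s).filter fun U => Bad (T ∪ U)).card
        ≤ (H \ T).card.choose s)
    (hsM : M = m + s) :
    2 * ((H.powersetCard M).filter Bad).card * (M.choose m)
      ≤ ((H.powersetCard m).filter Bad).card * ((H.card - m).choose s) := by
  have hchain : ((H.powersetCard M).filter Bad).card * (M.choose m)
      = ∑ T ∈ (H.powersetCard m).filter Bad,
          ((H.powersetCard M).filter fun S => T ⊆ S ∧ Bad S).card := by
    calc ((H.powersetCard M).filter Bad).card * (M.choose m)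
        = ∑ _S ∈ (H.powersetCard M).filter Bad, M.choose m := by
          rw [Finset.sum_const, smul_eq_mul]
      _ = ∑ S ∈ (H.powersetCard M).filter Bad,
            ((H.powersetCard m).filter fun T => T ⊆ S ∧ Bad T).card := by
          apply Finset.sum_congr rfl
          intro S hS
          rw [Finset.mem_filter, Finset.mem_powersetCard] at hS
          obtain ⟨⟨hSH, hScard⟩, hBS⟩ := hS
          have he : (H.powersetCard m).filter (fun T => T ⊆ S ∧ Bad T)
              = S.powersetCard m := by
            ext T
            simp only [Finset.mem_filter, Finset.mem_powersetCard]
            constructor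
            · rintro ⟨⟨_, hTc⟩, hTS, _⟩; exact ⟨hTS, hTc⟩
            · rintro ⟨hTS, hTc⟩
              exact ⟨⟨hTS.trans hSH, hTc⟩, hTS, hmono hTS hBS⟩
          rw [he, Finset.card_powersetCard, hScard]
      _ = ∑ S ∈ H.powersetCard M,
            ((H.powersetCard m).filter fun T => T ⊆ S ∧ Bad T ∧ Bad S).card := by
          rw [Finset.sum_filter]
          apply Finset.sum_congr rfl
          intro S _
          by_cases hBS : Bad S
          · rw [if_pos hBS]
            apply congrArg
            apply Finset.filter_congr
            intro T _
            constructor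
            · rintro ⟨h1, h2⟩; exact ⟨h1, h2, hBS⟩
            · rintro ⟨h1, h2, _⟩; exact ⟨h1, h2⟩
          · rw [if_neg hBS]
            have he : (H.powersetCard m).filter (fun T => T ⊆ S ∧ Bad T ∧ Bad S) = ∅ :=
              Finset.filter_false_of_mem (fun T _ => by rintro ⟨_, _, hc⟩; exact hBS hc)
            rw [he, Finset.card_empty]
      _ = ∑ T ∈ H.powersetCard m,
            ((H.powersetCard M).filter fun S => T ⊆ S ∧ Bad T ∧ Bad S).card := by
          simp only [Finset.card_filter]
          exact Finset.sum_comm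
      _ = ∑ T ∈ (H.powersetCard m).filter Bad,
            ((H.powersetCard M).filter fun S => T ⊆ S ∧ Bad S).card := by
          rw [Finset.sum_filter]
          apply Finset.sum_congr rfl
          intro T _
          by_cases hBT : Bad T
          · rw [if_pos hBT]
            apply congrArg
            apply Finset.filter_congr
            intro S _
            constructor
            · rintro ⟨h1, _, h3⟩; exact ⟨h1, h3⟩
            · rintro ⟨h1, h3⟩; exact ⟨h1, hBT, h3⟩
          · rw [if_neg hBT]
            have he : (H.powersetCard M).filter (fun S => T ⊆ S ∧ Bad T ∧ Bad S) = ∅ :=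
              Finset.filter_false_of_mem (fun S _ => by rintro ⟨_, hc, _⟩; exact hBT hc)
            rw [he, Finset.card_empty]
  have hperT : ∀ T ∈ (H.powersetCard m).filter Bad,
      2 * ((H.powersetCard M).filter fun S => T ⊆ S ∧ Bad S).card
        ≤ (H.card - m).choose s := by
    intro T hT
    rw [Finset.mem_filter, Finset.mem_powersetCard] at hT
    obtain ⟨⟨hTH, hTc⟩, _⟩ := hT
    have hbij : ((H.powersetCard M).filter fun S => T ⊆ S ∧ Bad S).card
        = (((H \ T).powersetCard s).filter fun U => Bad (T ∪ U)).card := by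
      apply Finset.card_nbij' (fun S => S \ T) (fun U => T ∪ U)
      · intro S hS
        rw [Finset.mem_coe, Finset.mem_filter, Finset.mem_powersetCard] at hS ⊢
        obtain ⟨⟨hSH, hSc⟩, hTS, hBS⟩ := hS
        refine ⟨⟨Finset.sdiff_subset_sdiff hSH Finset.Subset.rfl, ?_⟩, ?_⟩
        · rw [Finset.card_sdiff_of_subset hTS, hSc, hTc, hsM]; omega
        · rw [Finset.union_sdiff_of_subset hTS]; exact hBS
      · intro U hU
        rw [Finset.mem_coe, Finset.mem_filter, Finset.mem_powersetCard] at hU ⊢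
        obtain ⟨⟨hUsub, hUc⟩, hBU⟩ := hU
        have hdisj : Disjoint T U := (Finset.sdiff_disjoint.mono_left hUsub).symm
        refine ⟨⟨Finset.union_subset hTH (hUsub.trans Finset.sdiff_subset), ?_⟩,
          Finset.subset_union_left, hBU⟩
        rw [Finset.card_union_of_disjoint hdisj, hTc, hUc, hsM]
      · intro S hS
        rw [Finset.mem_coe, Finset.mem_filter] at hS
        exact Finset.union_sdiff_of_subset hS.2.1
      · intro U hU
        rw [Finset.mem_coe, Finset.mem_filter, Finset.mem_powersetCard] at hU
        exact Finset.union_sdiff_cancel_left (Finset.sdiff_disjoint.mono_left hU.1.1).symm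
    rw [hbij]
    have hm := hmarkov T hTH hTc
    rwa [Finset.card_sdiff_of_subset hTH, hTc] at hm
  calc 2 * ((H.powersetCard M).filter Bad).card * (M.choose m)
      = ∑ T ∈ (H.powersetCard m).filter Bad,
          2 * ((H.powersetCard M).filter fun S => T ⊆ S ∧ Bad S).card := by
        rw [mul_assoc, hchain, Finset.mul_sum]
    _ ≤ ∑ _T ∈ (H.powersetCard m).filter Bad, (H.card - m).choose s :=
        Finset.sum_le_sum hperT
    _ = _ := by rw [Finset.sum_const, smul_eq_mul]

lemma coeM_card_filter {α : Type*} (P : Finset (Finset α)) (Q : Set α → Prop) :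
    ((↑P : Finset (Set α)).filter Q).card = (P.filter fun S : Finset α => Q ↑S).card := by
  have h0 : (↑P : Finset (Set α)) = P.sup (fun S => {(↑S : Set α)}) := rfl
  have h1 : (↑P : Finset (Set α)) = P.image (fun S : Finset α => (S : Set α)) := by
    rw [h0, Finset.sup_singleton_apply]
  rw [h1, Finset.filter_image]
  exact Finset.card_image_of_injective _ Finset.coe_injective

/-- Let `t, d, s, k` be positive integers, `H ⊆ ℝ^t` finite with
inference dimension at most `d` and `|H| ≥ s·k`, and `x ∈ ℝ^t`.  If `S` is chosen
uniformly among all subsets of `H` of cardinality `s·k`, then the probability that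
`|H \ infer(S, x)| ≥ (2d/(s+1))·|H|` is at most `(1/2)^k`; stated by counting: the
number of bad subsets is at most `(1/2)^k` times the number of all size-`s·k` subsets. -/
theorem stmt4 {t d s k : ℕ} (ht : 0 < t) (hd : 0 < d) (hs : 0 < s) (hk : 0 < k)
    (H : Finset (Fin t → ℝ)) (hdim : inferenceDim H ≤ d) (hcard : s * k ≤ H.card)
    (x : Fin t → ℝ) :
    (((H.powersetCard (s * k)).filter fun S =>
        (2 * (d : ℝ) / ((s : ℝ) + 1)) * (H.card : ℝ) ≤
          ((H.filter fun h => h ∉ infer (↑S) x).card : ℝ)).card : ℝ)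
      ≤ (1 / 2 : ℝ) ^ k * ((H.powersetCard (s * k)).card : ℝ) := by
  rw [coeM_card_filter]
  have hH : 0 < H.card := lt_of_lt_of_le (Nat.mul_pos hs hk) hcard
  have hfact := fact2 (inferenceDim_prop hdim) x hd
  have main : ∀ j : ℕ, s * j ≤ H.card →
      2 ^ j * ((H.powersetCard (s * j)).filter fun S : Finset (Fin t → ℝ) =>
        (2 * (d : ℝ) / ((s : ℝ) + 1)) * (H.card : ℝ) ≤
          ((H.filter fun h => h ∉ infer (↑S) x).card : ℝ)).card
        ≤ H.card.choose (s * j) := by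
    intro j
    induction j with
    | zero =>
      intro _
      simp only [Nat.mul_zero, pow_zero, one_mul, Nat.choose_zero_right]
      calc _ ≤ (H.powersetCard 0).card := Finset.card_filter_le _ _
        _ = 1 := by rw [Finset.card_powersetCard, Nat.choose_zero_right]
    | succ j ih =>
      intro hj1
      have hj : s * j ≤ H.card := le_trans (Nat.mul_le_mul_left s (Nat.le_succ j)) hj1
      have hstep := stepLemGen H
        (fun S : Finset (Fin t → ℝ) => (2 * (d : ℝ) / ((s : ℝ) + 1)) * (H.card : ℝ) ≤
          ((H.filter fun h => h ∉ infer (↑S) x).card : ℝ))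
        (fun hTS hBS => badMono x hTS hBS)
        s (s * j) (s * (j + 1))
        (fun T hTH _ => markovLem hd hH x hfact T hTH)
        (by rw [Nat.mul_succ])
      have hssub : s * (j + 1) - s * j = s := by rw [Nat.mul_succ]; omega
      have hid : H.card.choose (s * j) * ((H.card - s * j).choose s)
          = H.card.choose (s * (j + 1)) * ((s * (j + 1)).choose (s * j)) := by
        rw [Nat.choose_mul (Nat.mul_le_mul_left s (Nat.le_succ j)), hssub]
      have hcalc : (2 ^ (j + 1) * ((H.powersetCard (s * (j + 1))).filter fun S : Finset (Fin t → ℝ) =>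
            (2 * (d : ℝ) / ((s : ℝ) + 1)) * (H.card : ℝ) ≤
              ((H.filter fun h => h ∉ infer (↑S) x).card : ℝ)).card)
            * ((s * (j + 1)).choose (s * j))
          ≤ H.card.choose (s * (j + 1)) * ((s * (j + 1)).choose (s * j)) := by
        calc (2 ^ (j + 1) * ((H.powersetCard (s * (j + 1))).filter fun S : Finset (Fin t → ℝ) =>
            (2 * (d : ℝ) / ((s : ℝ) + 1)) * (H.card : ℝ) ≤
              ((H.filter fun h => h ∉ infer (↑S) x).card : ℝ)).card)
            * ((s * (j + 1)).choose (s * j))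
            = 2 ^ j * (2 * ((H.powersetCard (s * (j + 1))).filter fun S : Finset (Fin t → ℝ) =>
              (2 * (d : ℝ) / ((s : ℝ) + 1)) * (H.card : ℝ) ≤
                ((H.filter fun h => h ∉ infer (↑S) x).card : ℝ)).card
              * ((s * (j + 1)).choose (s * j))) := by ring
          _ ≤ 2 ^ j * (((H.powersetCard (s * j)).filter fun S : Finset (Fin t → ℝ) =>
              (2 * (d : ℝ) / ((s : ℝ) + 1)) * (H.card : ℝ) ≤
                ((H.filter fun h => h ∉ infer (↑S) x).card : ℝ)).card
              * ((H.card - s * j).choose s)) := Nat.mul_le_mul_left _ hstep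
          _ = (2 ^ j * ((H.powersetCard (s * j)).filter fun S : Finset (Fin t → ℝ) =>
              (2 * (d : ℝ) / ((s : ℝ) + 1)) * (H.card : ℝ) ≤
                ((H.filter fun h => h ∉ infer (↑S) x).card : ℝ)).card)
              * ((H.card - s * j).choose s) := by ring
          _ ≤ H.card.choose (s * j) * ((H.card - s * j).choose s) :=
              Nat.mul_le_mul_right _ (ih hj)
          _ = _ := hid
      exact Nat.le_of_mul_le_mul_right hcalc
        (Nat.choose_pos (Nat.mul_le_mul_left s (Nat.le_succ j)))
  have hmain := main k hcard
  rw [show (1 / 2 : ℝ) ^ k * ((H.powersetCard (s * k)).card : ℝ)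
      = ((H.powersetCard (s * k)).card : ℝ) / 2 ^ k from by
        rw [one_div, inv_pow]; ring]
  rw [le_div_iff₀ (by positivity)]
  rw [Finset.card_powersetCard]
  rw [Nat.mul_comm] at hmain
  calc (((H.powersetCard (s * k)).filter fun S : Finset (Fin t → ℝ) =>
        (2 * (d : ℝ) / ((s : ℝ) + 1)) * (H.card : ℝ) ≤
          ((H.filter fun h => h ∉ infer (↑S) x).card : ℝ)).card : ℝ) * 2 ^ k
      = ((((H.powersetCard (s * k)).filter fun S : Finset (Fin t → ℝ) =>
        (2 * (d : ℝ) / ((s : ℝ) + 1)) * (H.card : ℝ) ≤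
          ((H.filter fun h => h ∉ infer (↑S) x).card : ℝ)).card * 2 ^ k : ℕ) : ℝ) := by
        push_cast; ring
    _ ≤ _ := by exact_mod_cast hmain

end
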